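/- A p-boolean ring is a commutative ring R of characteristic p such that r^p = r for all r ∈ R. There exists a p-boolean ring R₀ of countable cardinality containing a countably infinite family of pairwise orthogonal idempotents. Concretely, in R₀ = 𝔽_p[X₁,X₂,...]/(X_i^p − X_i : i ∈ ℕ), the elements a_n = (1 − X_n^{p−1}) ∏_{0≤i≤n−1} X_i^{p−1} are pairwise orthogonal idempotents, and a_n ≠ a_m for n ≠ m. -/

import Mathlib

open MvPolynomial

/-- `R₀ = 𝔽_p[X₁, X₂, ...] / (Xᵢᵖ - Xᵢ)`. -/
abbrev pBoolFree (p : ℕ) : Type :=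
  MvPolynomial ℕ (ZMod p) ⧸
    (Ideal.span (Set.range fun i : ℕ => (X i ^ p - X i : MvPolynomial ℕ (ZMod p))))

/-- The orthogonal idempotents `aₙ = (1 - Xₙ^{p-1}) ∏_{i < n} Xᵢ^{p-1}` in `R₀`. -/
noncomputable def pBoolIdem (p : ℕ) (n : ℕ) : pBoolFree p :=
  Ideal.Quotient.mk _
    ((1 - X n ^ (p - 1)) * ∏ i ∈ Finset.range n, X i ^ (p - 1))

section Aux
variable (p : ℕ) [Fact p.Prime]

private noncomputable def pbMk : MvPolynomial ℕ (ZMod p) →+* pBoolFree p :=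
  Ideal.Quotient.mk _

private lemma pbX_pow (i : ℕ) : (pbMk p (X i)) ^ p = pbMk p (X i) := by
  rw [← map_pow]
  refine Ideal.Quotient.eq.2 ?_
  exact Ideal.subset_span ⟨i, rfl⟩

/-- Evaluation homomorphism given any assignment of variables in `ZMod p`. -/
private noncomputable def pbEval (σ : ℕ → ZMod p) : pBoolFree p →+* ZMod p :=
  Ideal.Quotient.lift _ (eval σ) (by
    intro f hf
    refine Submodule.span_induction ?_ (by simp) (fun x y _ _ hx hy => by simp [hx, hy])
      (fun r x _ hx => by simp [smul_eq_mul, hx]) hf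
    rintro f ⟨i, rfl⟩
    simp [ZMod.pow_card])

private lemma pbEval_mk (σ : ℕ → ZMod p) (f : MvPolynomial ℕ (ZMod p)) :
    pbEval p σ (pbMk p f) = eval σ f := rfl

private lemma pb_nontrivial : Nontrivial (pBoolFree p) :=
  (pbEval p fun _ => 0).domain_nontrivial

private lemma pb_charP : CharP (pBoolFree p) p := by
  haveI := pb_nontrivial p
  have hp0 : (p : pBoolFree p) = 0 := by
    have h2 : pbMk p ((p : ℕ) : MvPolynomial ℕ (ZMod p)) = ((p : ℕ) : pBoolFree p) :=
      map_natCast (pbMk p) p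
    rw [← h2, CharP.cast_eq_zero, map_zero]
  have hdvd : ringChar (pBoolFree p) ∣ p := ringChar.dvd hp0
  rcases (Fact.out : p.Prime).eq_one_or_self_of_dvd _ hdvd with h | h
  · exact absurd h CharP.ringChar_ne_one
  · have h3 := ringChar.charP (pBoolFree p)
    rwa [h] at h3

private lemma pb_pow (r : pBoolFree p) : r ^ p = r := by
  haveI := pb_charP p
  obtain ⟨f, rfl⟩ : ∃ f, pbMk p f = r := Ideal.Quotient.mk_surjective r
  induction f using MvPolynomial.induction_on with
  | C a => rw [← map_pow, ← C_pow, ZMod.pow_card]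
  | add f g hf hg => rw [map_add, add_pow_char, hf, hg]
  | mul_X f i hf => rw [map_mul, mul_pow, hf, pbX_pow]

/-- The idempotents written in the quotient. -/
private lemma pbIdem_eq (n : ℕ) :
    pBoolIdem p n = (1 - pbMk p (X n) ^ (p - 1)) *
      ∏ i ∈ Finset.range n, pbMk p (X i) ^ (p - 1) := by
  simp [pBoolIdem, pbMk, map_mul, map_sub, map_pow, map_prod]

private lemma pb_b_idem (i : ℕ) :
    pbMk p (X i) ^ (p - 1) * pbMk p (X i) ^ (p - 1) = pbMk p (X i) ^ (p - 1) := by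
  have hp2 : 2 ≤ p := (Fact.out : p.Prime).two_le
  have h : (p - 1) + (p - 1) = p + (p - 2) := by omega
  rw [← pow_add, h, pow_add, pbX_pow]
  rw [← pow_succ']
  congr 1
  omega

private lemma pb_orth_lt (n m : ℕ) (h : n < m) :
    pBoolIdem p n * pBoolIdem p m = 0 := by
  rw [pbIdem_eq, pbIdem_eq]
  set b := fun i => pbMk p (X i) ^ (p - 1) with hb
  have hm : b n * ∏ i ∈ (Finset.range m).erase n, b i = ∏ i ∈ Finset.range m, b i :=
    Finset.mul_prod_erase _ _ (Finset.mem_range.2 h)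
  have h0 : (1 - b n) * b n = 0 := by
    have := pb_b_idem p n
    linear_combination -this
  rw [← hm]
  linear_combination ((∏ i ∈ Finset.range n, b i) * ((1 - b m) *
    ∏ i ∈ (Finset.range m).erase n, b i)) * h0

private lemma pb_idem (n : ℕ) : pBoolIdem p n * pBoolIdem p n = pBoolIdem p n := by
  rw [pbIdem_eq]
  set b := fun i => pbMk p (X i) ^ (p - 1) with hb
  have h1 : (1 - b n) * (1 - b n) = 1 - b n := by
    have := pb_b_idem p n
    linear_combination this
  have h2 : (∏ i ∈ Finset.range n, b i) * (∏ i ∈ Finset.range n, b i)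
      = ∏ i ∈ Finset.range n, b i := by
    rw [← Finset.prod_mul_distrib]
    exact Finset.prod_congr rfl fun i _ => pb_b_idem p i
  calc (1 - b n) * (∏ i ∈ Finset.range n, b i) * ((1 - b n) * ∏ i ∈ Finset.range n, b i)
      = ((1 - b n) * (1 - b n)) *
        ((∏ i ∈ Finset.range n, b i) * ∏ i ∈ Finset.range n, b i) := by ring
    _ = (1 - b n) * ∏ i ∈ Finset.range n, b i := by rw [h1, h2]

private lemma pbEval_idem (σ : ℕ → ZMod p) (m : ℕ) :
    pbEval p σ (pBoolIdem p m)
      = (1 - σ m ^ (p - 1)) * ∏ i ∈ Finset.range m, σ i ^ (p - 1) := by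
  have : pbEval p σ (pBoolIdem p m)
      = eval σ ((1 - X m ^ (p - 1)) * ∏ i ∈ Finset.range m, X i ^ (p - 1)) := rfl
  rw [this]
  simp

private lemma pb_inj : Function.Injective (pBoolIdem p) := by
  haveI : Fact (1 < p) := ⟨(Fact.out : p.Prime).one_lt⟩
  intro n m h
  by_contra hnm
  have h1 := congrArg (pbEval p (fun i => if i = n then (0 : ZMod p) else 1)) h
  rw [pbEval_idem, pbEval_idem] at h1
  have hp1 : p - 1 ≠ 0 := by
    have := (Fact.out : p.Prime).two_le; omega
  have hn : (1 - (if n = n then (0 : ZMod p) else 1) ^ (p - 1)) *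
      ∏ i ∈ Finset.range n, (if i = n then (0 : ZMod p) else 1) ^ (p - 1) = 1 := by
    rw [if_pos rfl, zero_pow hp1, sub_zero, one_mul]
    rw [Finset.prod_eq_one]
    intro i hi
    rw [if_neg (by have := Finset.mem_range.1 hi; omega), one_pow]
  have hm : (1 - (if m = n then (0 : ZMod p) else 1) ^ (p - 1)) *
      ∏ i ∈ Finset.range m, (if i = n then (0 : ZMod p) else 1) ^ (p - 1) = 0 := by
    rw [if_neg (fun hc => hnm hc.symm), one_pow, sub_self, zero_mul]
  rw [hn, hm] at h1
  exact one_ne_zero h1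

end Aux

/-- `R₀ = 𝔽_p[X₁,X₂,...]/(Xᵢᵖ - Xᵢ)` is a countable `p`-boolean ring
(characteristic `p` and `r^p = r` for all `r`), and the elements
`aₙ = (1 - Xₙ^{p-1}) ∏_{i<n} Xᵢ^{p-1}` form a countably infinite family of pairwise
orthogonal idempotents, with `aₙ ≠ aₘ` for `n ≠ m`. -/
theorem stmt14 (p : ℕ) [Fact p.Prime] :
    CharP (pBoolFree p) p ∧
    (∀ r : pBoolFree p, r ^ p = r) ∧
    Countable (pBoolFree p) ∧
    (∀ n, pBoolIdem p n * pBoolIdem p n = pBoolIdem p n) ∧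
    (∀ n m, n ≠ m → pBoolIdem p n * pBoolIdem p m = 0) ∧
    Function.Injective (pBoolIdem p) := by
  refine ⟨pb_charP p, pb_pow p, ?_, pb_idem p, ?_, pb_inj p⟩
  · haveI hc : Countable (MvPolynomial ℕ (ZMod p)) :=
      (AddMonoidAlgebra.coeff_injective.countable : Countable (AddMonoidAlgebra (ZMod p) (ℕ →₀ ℕ)))
    exact Function.Surjective.countable (Ideal.Quotient.mk_surjective)
  · intro n m hnm
    rcases lt_or_gt_of_ne hnm with h | h
    · exact pb_orth_lt p n m h
    · rw [mul_comm]; exact pb_orth_lt p m n h
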